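/- Let V : ℝ → ℝ and let c : ℝ × [0,∞) → (0,∞) be strictly subadditive in the impulse, i.e., c(x, δ + δ̄) < c(x,δ) + c(x+δ, δ̄) for all x ∈ ℝ and all δ, δ̄ ≥ 0. Define MV(x) := sup_{δ ≥ 0} {V(x+δ) − c(x,δ)} and I* := {x ∈ ℝ : MV(x) = V(x)}. Suppose that for every x ∈ I* the supremum defining MV(x) is attained at some δ*(x) ≥ 0. Then for every x ∈ I*, the point x + δ*(x) does not belong to I*. -/
import Mathlib


noncomputable section

/-- The loss operator with unconstrained nonnegative impulses:
`MV(x) = sup_{δ ≥ 0} {V(x+δ) − c(x,δ)}`. -/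
def Mop (V : ℝ → ℝ) (c : ℝ → ℝ → ℝ) (x : ℝ) : ℝ :=
  sSup ((fun δ => V (x + δ) - c x δ) '' Set.Ici (0:ℝ))

/-- If the cost `c` is strictly positive and strictly subadditive in
the impulse, and for every `x` in the intervention region `I* = {MV = V}` the supremum
defining `MV(x)` is attained at `δ*(x) ≥ 0`, then `x + δ*(x) ∉ I*` for every `x ∈ I*`. -/
theorem statement16 (V : ℝ → ℝ) (c : ℝ → ℝ → ℝ)
    (hc_pos : ∀ x δ, 0 ≤ δ → 0 < c x δ)
    (hc_sub : ∀ x δ δ', 0 ≤ δ → 0 ≤ δ' → c x (δ + δ') < c x δ + c (x + δ) δ')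
    (Istar : Set ℝ) (hIstar : Istar = {x | Mop V c x = V x})
    (δs : ℝ → ℝ)
    (hδs : ∀ x ∈ Istar, 0 ≤ δs x ∧
      ∀ δ, 0 ≤ δ → V (x + δ) - c x δ ≤ V (x + δs x) - c x (δs x)) :
    ∀ x ∈ Istar, x + δs x ∉ Istar := by
  -- key: for y ∈ Istar, V y = V (y + δs y) - c y (δs y)
  have key : ∀ y ∈ Istar, V y = V (y + δs y) - c y (δs y) := by
    intro y hy
    obtain ⟨hy0, hymax⟩ := hδs y hy
    have hmem : V (y + δs y) - c y (δs y) ∈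
        ((fun δ => V (y + δ) - c y δ) '' Set.Ici (0:ℝ)) :=
      ⟨δs y, hy0, rfl⟩
    have hbdd : ∀ z ∈ ((fun δ => V (y + δ) - c y δ) '' Set.Ici (0:ℝ)),
        z ≤ V (y + δs y) - c y (δs y) := by
      rintro z ⟨δ, hδ, rfl⟩
      exact hymax δ hδ
    have hM : Mop V c y = V (y + δs y) - c y (δs y) :=
      le_antisymm (csSup_le ⟨_, hmem⟩ hbdd) (le_csSup ⟨_, hbdd⟩ hmem)
    have := hIstar ▸ hy
    simp only [Set.mem_setOf_eq] at this
    linarith [hM, this]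
  intro x hx hyx
  obtain ⟨hx0, hxmax⟩ := hδs x hx
  obtain ⟨hy0, _⟩ := hδs _ hyx
  have h1 := key x hx
  have h2 := key _ hyx
  have h3 := hxmax (δs x + δs (x + δs x)) (by linarith)
  rw [← add_assoc] at h3
  have h4 := hc_sub x (δs x) (δs (x + δs x)) hx0 hy0
  linarith
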